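/- Let g^{-1} satisfy λ^{-1}|ξ|² ≤ ⟨g^{-1}(x)ξ,ξ⟩ ≤ λ|ξ|², be Lipschitz with constant Λ, and g^{-1}(0) = I. Let σ(x)=|x|, w = ψ(σ) with ψ the singular weight with parameter ε ∈ (0,1]. Then there is C ≥ 1 depending only on λ, Λ, ε such that on B₁∖{0}: C^{−1}σ ≤ w ≤ σ and C^{−1} ≤ |∇_g w|_g ≤ C; moreover λ^{−1}σ^{−2}/(1+σ^ε)² ≤ |∇_g w|²_g/w² ≤ λσ^{−2}, and in particular |∇_g w|²_g/w² ≥ λ^{−1}σ^{−2}/4 for σ ≤ 1. -/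

import Mathlib

noncomputable section
open scoped BigOperators
open Real

variable {n : ℕ}

/-- partial derivative in coordinate direction `i`. -/
def pd (i : Fin n) (f : (Fin n → ℝ) → ℝ) (x : Fin n → ℝ) : ℝ :=
  fderiv ℝ f x (Pi.single i 1)

/-- the g-gradient ∇_g f = g⁻¹ ∇f. -/
def gGrad (ginv : (Fin n → ℝ) → Matrix (Fin n) (Fin n) ℝ)
    (f : (Fin n → ℝ) → ℝ) (x : Fin n → ℝ) : Fin n → ℝ :=
  fun i => ∑ j, ginv x i j * pd j f x

/-- divergence of a vector field. -/
def vdiv (X : (Fin n → ℝ) → Fin n → ℝ) (x : Fin n → ℝ) : ℝ :=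
  ∑ i, pd i (fun y => X y i) x

/-- the g-Laplacian Δ_g f = div(g⁻¹∇f). -/
def gLap (ginv : (Fin n → ℝ) → Matrix (Fin n) (Fin n) ℝ)
    (f : (Fin n → ℝ) → ℝ) (x : Fin n → ℝ) : ℝ :=
  vdiv (gGrad ginv f) x

/-- the g-pairing ∇_g u ·_g ∇_g f = ⟨g⁻¹∇u, ∇f⟩;
    in particular `gPair ginv f f = |∇_g f|²_g`. -/
def gPair (ginv : (Fin n → ℝ) → Matrix (Fin n) (Fin n) ℝ)
    (u f : (Fin n → ℝ) → ℝ) (x : Fin n → ℝ) : ℝ :=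
  ∑ i, ∑ j, ginv x i j * pd i u x * pd j f x
/-- the Euclidean norm σ(x) = |x| on ℝⁿ. -/
def sigma' (x : Fin n → ℝ) : ℝ := Real.sqrt (∑ i, x i ^ 2)

/-- the singular weight ψ. -/
def psi (ε s : ℝ) : ℝ :=
  s * Real.exp (-∫ t in (0:ℝ)..s, 1 / (t ^ (1 - ε) * (1 + t ^ ε)))

/-! ### Auxiliary lemmas -/

open MeasureTheory intervalIntegral in

/-- the integrand of the singular weight. -/
def wbKer (ε t : ℝ) : ℝ := 1 / (t ^ (1 - ε) * (1 + t ^ ε))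

/-- the integral in the singular weight. -/
def wbInt (ε s : ℝ) : ℝ := ∫ t in (0:ℝ)..s, wbKer ε t

lemma wbKer_nonneg {ε : ℝ} {t : ℝ} (ht : 0 ≤ t) : 0 ≤ wbKer ε t := by
  unfold wbKer; positivity

lemma wbKer_contAt {ε : ℝ} {s : ℝ} (hs : 0 < s) : ContinuousAt (wbKer ε) s := by
  unfold wbKer
  have h1 : ContinuousAt (fun t : ℝ => t ^ (1 - ε)) s :=
    Real.continuousAt_rpow_const _ _ (Or.inl hs.ne')
  have h2 : ContinuousAt (fun t : ℝ => t ^ ε) s :=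
    Real.continuousAt_rpow_const _ _ (Or.inl hs.ne')
  have hp1 : (0:ℝ) < s ^ (1 - ε) := rpow_pos_of_pos hs _
  have hp2 : (0:ℝ) < s ^ ε := rpow_pos_of_pos hs _
  exact continuousAt_const.div (h1.mul (continuousAt_const.add h2)) (by positivity)

lemma wbKer_contOn (ε : ℝ) : ContinuousOn (wbKer ε) (Set.Ioi 0) :=
  fun s hs => (wbKer_contAt hs).continuousWithinAt

open MeasureTheory in
lemma wbKer_intInt {ε : ℝ} (hε : 0 < ε) {s : ℝ} (hs : 0 ≤ s) :
    IntervalIntegrable (wbKer ε) volume 0 s := by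
  have hbase : IntervalIntegrable (fun t : ℝ => t ^ (ε - 1)) volume 0 s :=
    intervalIntegral.intervalIntegrable_rpow' (by linarith)
  have hmeas : AEStronglyMeasurable (wbKer ε) (volume.restrict (Set.uIoc 0 s)) := by
    apply ContinuousOn.aestronglyMeasurable ?_ measurableSet_uIoc
    apply (wbKer_contOn ε).mono
    rw [Set.uIoc_of_le hs]
    intro t ht; exact ht.1
  refine hbase.mono_fun hmeas ?_
  filter_upwards [MeasureTheory.ae_restrict_mem measurableSet_uIoc] with t ht
  rw [Set.uIoc_of_le hs] at ht
  obtain ⟨ht0, _⟩ := ht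
  have h1 : (0:ℝ) < t ^ (1 - ε) := rpow_pos_of_pos ht0 _
  have h2 : (0:ℝ) < t ^ ε := rpow_pos_of_pos ht0 _
  have hle : wbKer ε t ≤ t ^ (ε - 1) := by
    unfold wbKer
    rw [show (ε - 1) = -(1 - ε) by ring, rpow_neg ht0.le, ← one_div]
    apply div_le_div_of_nonneg_left one_pos.le h1
    nlinarith
  rw [norm_of_nonneg (wbKer_nonneg ht0.le), norm_of_nonneg (rpow_pos_of_pos ht0 _).le]
  exact hle

open MeasureTheory in
lemma wbInt_hasDerivAt {ε : ℝ} (hε : 0 < ε) {s : ℝ} (hs : 0 < s) :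
    HasDerivAt (wbInt ε) (wbKer ε s) s :=
  intervalIntegral.integral_hasDerivAt_right (wbKer_intInt hε hs.le)
    (ContinuousOn.stronglyMeasurableAtFilter isOpen_Ioi (wbKer_contOn ε) s hs)
    (wbKer_contAt hs)

lemma wbInt_nonneg {ε : ℝ} {s : ℝ} (hs : 0 ≤ s) : 0 ≤ wbInt ε s :=
  intervalIntegral.integral_nonneg hs (fun t ht => wbKer_nonneg ht.1)

open MeasureTheory in
lemma wbInt_le_one {ε : ℝ} (hε : 0 < ε) {s : ℝ} (hs : 0 < s) (hs1 : s ≤ 1) :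
    wbInt ε s ≤ wbInt ε 1 := by
  have hi1 : IntervalIntegrable (wbKer ε) volume 0 s := wbKer_intInt hε hs.le
  have hi2 : IntervalIntegrable (wbKer ε) volume s 1 := by
    apply ContinuousOn.intervalIntegrable
    apply (wbKer_contOn ε).mono
    rw [Set.uIcc_of_le hs1]
    intro t ht; exact lt_of_lt_of_le hs ht.1
  have hadd := intervalIntegral.integral_add_adjacent_intervals hi1 hi2
  have h2 : 0 ≤ ∫ t in s..(1:ℝ), wbKer ε t :=
    intervalIntegral.integral_nonneg hs1 (fun t ht => wbKer_nonneg (le_trans hs.le ht.1))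
  unfold wbInt
  linarith [hadd]

lemma psi_eq (ε s : ℝ) : psi ε s = s * Real.exp (-wbInt ε s) := rfl

lemma psi_hasDerivAt {ε : ℝ} (hε : 0 < ε) {s : ℝ} (hs : 0 < s) :
    HasDerivAt (psi ε) (Real.exp (-wbInt ε s) / (1 + s ^ ε)) s := by
  have hF := wbInt_hasDerivAt hε hs
  have hexp : HasDerivAt (fun u => Real.exp (-wbInt ε u))
      (Real.exp (-wbInt ε s) * (-(wbKer ε s))) s := hF.neg.exp
  have h : HasDerivAt (fun u => u * Real.exp (-wbInt ε u))
      (1 * Real.exp (-wbInt ε s) + s * (Real.exp (-wbInt ε s) * (-(wbKer ε s)))) s :=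
    (hasDerivAt_id s).mul hexp
  have hpsi : psi ε = fun u => u * Real.exp (-wbInt ε u) := rfl
  rw [hpsi]
  convert h using 1
  have hp1 : (0:ℝ) < s ^ (1 - ε) := rpow_pos_of_pos hs _
  have hp2 : (0:ℝ) < s ^ ε := rpow_pos_of_pos hs _
  have hAB : s ^ (1 - ε) * s ^ ε = s := by
    rw [← Real.rpow_add hs]; norm_num
  have hkey : s * wbKer ε s = s ^ ε / (1 + s ^ ε) := by
    unfold wbKer
    field_simp
    nlinarith [hAB]
  rw [show (1 : ℝ) * Real.exp (-wbInt ε s) + s * (Real.exp (-wbInt ε s) * (-(wbKer ε s)))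
      = Real.exp (-wbInt ε s) * (1 - s * wbKer ε s) by ring, hkey]
  field_simp
  ring

lemma sigma'_pos {x : Fin n → ℝ} (hx : x ≠ 0) : 0 < sigma' x := by
  obtain ⟨i, hi⟩ := Function.ne_iff.mp hx
  have hpos : 0 < ∑ i, x i ^ 2 :=
    Finset.sum_pos' (fun i _ => sq_nonneg _)
      ⟨i, Finset.mem_univ i, lt_of_le_of_ne (sq_nonneg _) (Ne.symm (pow_ne_zero 2 hi))⟩
  exact Real.sqrt_pos.mpr hpos

lemma sigma'_sq (x : Fin n → ℝ) : sigma' x ^ 2 = ∑ i, x i ^ 2 :=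
  Real.sq_sqrt (Finset.sum_nonneg fun i _ => sq_nonneg _)

lemma sigma'_hasFDerivAt {x : Fin n → ℝ} (hx : x ≠ 0) :
    HasFDerivAt (sigma' (n := n))
      ((1 / (2 * sigma' x)) • ∑ i, ((2 : ℝ) * x i) •
        (ContinuousLinearMap.proj (R := ℝ) (φ := fun _ : Fin n => ℝ) i)) x := by
  have hg : HasFDerivAt (fun y : Fin n → ℝ => ∑ i, y i ^ 2)
      (∑ i, ((2 : ℝ) * x i) •
        (ContinuousLinearMap.proj (R := ℝ) (φ := fun _ : Fin n => ℝ) i)) x := by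
    apply HasFDerivAt.fun_sum
    intro i _
    have hp := (ContinuousLinearMap.proj (R := ℝ) (φ := fun _ : Fin n => ℝ) i).hasFDerivAt (x := x)
    have h2 := hp.fun_mul hp
    convert h2 using 1
    · rfl
    · funext y; simp [sq]
    · simp [two_mul, add_smul]
  have hpos : 0 < ∑ i, x i ^ 2 := by
    obtain ⟨i, hi⟩ := Function.ne_iff.mp hx
    exact Finset.sum_pos' (fun i _ => sq_nonneg _)
      ⟨i, Finset.mem_univ i, lt_of_le_of_ne (sq_nonneg _) (Ne.symm (pow_ne_zero 2 hi))⟩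
  exact hg.sqrt hpos.ne'

lemma w_hasFDerivAt {ε : ℝ} (hε : 0 < ε) {x : Fin n → ℝ} (hx : x ≠ 0) :
    HasFDerivAt (fun y => psi ε (sigma' y))
      ((Real.exp (-wbInt ε (sigma' x)) / (1 + (sigma' x) ^ ε)) •
        ((1 / (2 * sigma' x)) • ∑ i, ((2 : ℝ) * x i) •
          (ContinuousLinearMap.proj (R := ℝ) (φ := fun _ : Fin n => ℝ) i))) x :=
  (psi_hasDerivAt hε (sigma'_pos hx)).comp_hasFDerivAt x (sigma'_hasFDerivAt hx)

lemma pd_w {ε : ℝ} (hε : 0 < ε) {x : Fin n → ℝ} (hx : x ≠ 0) (j : Fin n) :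
    pd j (fun y => psi ε (sigma' y)) x
      = (Real.exp (-wbInt ε (sigma' x)) / (1 + (sigma' x) ^ ε)) * (x j / sigma' x) := by
  have h := (w_hasFDerivAt hε hx).fderiv
  rw [pd, h]
  have hs := sigma'_pos hx
  have h1ε : (0:ℝ) < 1 + sigma' x ^ ε := by
    have : (0:ℝ) ≤ sigma' x ^ ε := Real.rpow_nonneg hs.le _
    linarith
  simp only [ContinuousLinearMap.smul_apply, ContinuousLinearMap.sum_apply,
    ContinuousLinearMap.proj_apply, smul_eq_mul]
  rw [Finset.sum_eq_single j (fun i _ hij => by simp [Pi.single_apply, hij]) (by simp)]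
  simp only [Pi.single_eq_same, mul_one]
  field_simp

lemma gPair_w_eq {ε : ℝ} (hε : 0 < ε)
    (ginv : (Fin n → ℝ) → Matrix (Fin n) (Fin n) ℝ) {x : Fin n → ℝ} (hx : x ≠ 0) :
    gPair ginv (fun y => psi ε (sigma' y)) (fun y => psi ε (sigma' y)) x
      = (Real.exp (-wbInt ε (sigma' x)) / (1 + (sigma' x) ^ ε) / sigma' x) ^ 2
          * ∑ i, ∑ j, ginv x i j * x i * x j := by
  unfold gPair
  simp only [pd_w hε hx]
  rw [Finset.mul_sum]
  apply Finset.sum_congr rfl; intro i _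
  rw [Finset.mul_sum]
  apply Finset.sum_congr rfl; intro j _
  ring


lemma wb_auxC1 (lam X : ℝ) (hlam : 1 ≤ lam) (hX : 1 ≤ X) : 1 ≤ 2 * lam * X := by nlinarith

lemma wb_auxCE (lam E : ℝ) (hlam : 1 ≤ lam) (hE0 : 0 < E) : E / (2 * lam) ≤ E := by
  rw [div_le_iff₀ (by linarith)]; nlinarith

lemma wb_auxaE (E e B : ℝ) (hE0 : 0 < E) (hB1 : B ≤ 1) (hB0 : 0 ≤ B) (hEe : E ≤ e) :
    E / 2 ≤ e / (1 + B) := by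
  rw [div_le_div_iff₀ two_pos (by linarith)]; nlinarith

lemma wb_aux1 (lam E a : ℝ) (hlam : 1 ≤ lam) (hE0 : 0 < E) (haE : E / 2 ≤ a) :
    (E / (2 * lam)) ^ 2 ≤ lam⁻¹ * a ^ 2 := by
  have h1 : (0:ℝ) < lam := by linarith
  have h2 : E ^ 2 / 4 ≤ a ^ 2 := by nlinarith
  have h3 : lam⁻¹ * a ^ 2 * (2 * lam) ^ 2 = 4 * lam * a ^ 2 := by field_simp; ring
  rw [div_pow, div_le_iff₀ (by positivity : (0:ℝ) < (2 * lam) ^ 2), h3]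
  nlinarith

lemma wb_aux3 (lam a : ℝ) (h0 : 0 ≤ a) (h1 : a ≤ 1) (hlam : 0 ≤ lam) : lam * a ^ 2 ≤ lam := by
  have ha2 : a ^ 2 ≤ 1 := by nlinarith
  nlinarith [mul_le_mul_of_nonneg_left ha2 hlam]

lemma wb_aux2 (lam C t : ℝ) (hlam : 1 ≤ lam) (ht : t ≤ lam) (hC : 2 * lam ≤ C) : t ≤ C ^ 2 := by
  nlinarith

lemma wb_aux4 (li s B Q : ℝ) (h : li * s ^ 2 ≤ Q) (hs : 0 ≤ s) (hB : 0 ≤ B) :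
    li * (s ^ 4 * (1 + B) ^ 2) ≤ Q * (s ^ 2 * (1 + B) ^ 2) := by
  have h1 := mul_le_mul_of_nonneg_right h (by positivity : (0:ℝ) ≤ s ^ 2 * (1 + B) ^ 2)
  nlinarith [h1]

lemma wb_aux5 (lam s B Q : ℝ) (h : Q ≤ lam * s ^ 2) (hs : 0 ≤ s) (hB : 0 ≤ B) (hlam : 0 ≤ lam) :
    Q * s ^ 2 ≤ lam * (s ^ 4 * (1 + B) ^ 2) := by
  have h1 := mul_le_mul_of_nonneg_right h (by positivity : (0:ℝ) ≤ s ^ 2)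
  nlinarith [h1, mul_nonneg (mul_nonneg hlam (pow_nonneg hs 4)) (by nlinarith : (0:ℝ) ≤ B ^ 2 + 2 * B)]

lemma wb_aux6 (li s B Q : ℝ) (h : li * s ^ 2 ≤ Q) (hs : 0 ≤ s) (hB0 : 0 ≤ B) (hB1 : B ≤ 1)
    (hli : 0 ≤ li) : li * (s ^ 4 * (1 + B) ^ 2) ≤ Q * (s ^ 2 * 4) := by
  have h1 : (1 + B) ^ 2 ≤ 4 := by nlinarith
  have h2 := mul_le_mul_of_nonneg_right h (by positivity : (0:ℝ) ≤ 4 * s ^ 2)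
  nlinarith [h1, h2, mul_nonneg hli (pow_nonneg hs 4)]

set_option maxHeartbeats 1000000 in
theorem weight_bounds (lam Lam ε : ℝ) (hlam : 1 ≤ lam) (hLam : 0 < Lam)
    (hε : 0 < ε) (hε1 : ε ≤ 1) :
    ∃ C : ℝ, 1 ≤ C ∧
      ∀ (ginv : (Fin n → ℝ) → Matrix (Fin n) (Fin n) ℝ),
        (∀ x i j, ginv x i j = ginv x j i) →
        (∀ (x ξ : Fin n → ℝ),
          lam⁻¹ * (∑ i, ξ i ^ 2) ≤ ∑ i, ∑ j, ginv x i j * ξ i * ξ j) →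
        (∀ (x ξ : Fin n → ℝ),
          (∑ i, ∑ j, ginv x i j * ξ i * ξ j) ≤ lam * ∑ i, ξ i ^ 2) →
        (∀ x y : Fin n → ℝ, ∑ i, ∑ j, |ginv x i j - ginv y i j| ≤ Lam * sigma' (x - y)) →
        ginv 0 = 1 →
        ∀ x : Fin n → ℝ, x ≠ 0 → sigma' x < 1 →
          (C⁻¹ * sigma' x ≤ psi ε (sigma' x) ∧ psi ε (sigma' x) ≤ sigma' x) ∧
          (C⁻¹ ≤ Real.sqrt (gPair ginv (fun y => psi ε (sigma' y)) (fun y => psi ε (sigma' y)) x) ∧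
            Real.sqrt (gPair ginv (fun y => psi ε (sigma' y)) (fun y => psi ε (sigma' y)) x) ≤ C) ∧
          (lam⁻¹ / (sigma' x ^ 2 * (1 + sigma' x ^ ε) ^ 2) ≤
              gPair ginv (fun y => psi ε (sigma' y)) (fun y => psi ε (sigma' y)) x /
                psi ε (sigma' x) ^ 2 ∧
            gPair ginv (fun y => psi ε (sigma' y)) (fun y => psi ε (sigma' y)) x /
                psi ε (sigma' x) ^ 2 ≤ lam / sigma' x ^ 2) ∧
          lam⁻¹ / sigma' x ^ 2 / 4 ≤
            gPair ginv (fun y => psi ε (sigma' y)) (fun y => psi ε (sigma' y)) x /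
              psi ε (sigma' x) ^ 2 := by
  have hexp1 : (1:ℝ) ≤ Real.exp (wbInt ε 1) := Real.one_le_exp (wbInt_nonneg (by norm_num))
  refine ⟨2 * lam * Real.exp (wbInt ε 1), wb_auxC1 _ _ hlam hexp1, ?_⟩
  intro ginv hsym hlow hup hLip h0 x hx hs1
  clear hsym hLip h0
  have hlaminv : 0 < lam⁻¹ := by positivity
  have hlaminv1 : lam⁻¹ ≤ 1 := by
    rw [inv_le_one_iff₀]; right; exact hlam
  set s := sigma' x with hsdef
  have hs : 0 < s := sigma'_pos hx
  have hF0 : 0 ≤ wbInt ε s := wbInt_nonneg hs.le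
  have hF1 : wbInt ε s ≤ wbInt ε 1 := wbInt_le_one hε hs hs1.le
  set e := Real.exp (-wbInt ε s) with hedef
  set E := Real.exp (-wbInt ε 1) with hEdef
  have he0 : 0 < e := Real.exp_pos _
  have hE0 : 0 < E := Real.exp_pos _
  have hEe : E ≤ e := Real.exp_le_exp.mpr (by linarith)
  have he1 : e ≤ 1 := Real.exp_le_one_iff.mpr (by linarith)
  have hE1 : E ≤ 1 := le_trans hEe he1
  set B := s ^ ε with hBdef
  have hB0 : 0 < B := Real.rpow_pos_of_pos hs _
  have hB1 : B ≤ 1 := Real.rpow_le_one hs.le hs1.le hε.le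
  have h1B : (0:ℝ) < 1 + B := by linarith
  set C := 2 * lam * Real.exp (wbInt ε 1) with hCdef
  have hC0 : 0 < C := by positivity
  have hC2 : 2 * lam ≤ C := by
    rw [hCdef]
    have h2 : (0:ℝ) < 2 * lam := by linarith
    nlinarith [hexp1, h2]
  have hCinv : C⁻¹ = E / (2 * lam) := by
    rw [hCdef, hEdef, Real.exp_neg, mul_inv, mul_inv]
    ring
  have hCE : C⁻¹ ≤ E := by rw [hCinv]; exact wb_auxCE _ _ hlam hE0
  have hCi0 : 0 < C⁻¹ := by positivity
  have hpsi : psi ε s = s * e := by rw [psi_eq, hedef]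
  set a := e / (1 + B) with hadef
  have ha0 : 0 < a := by positivity
  have ha1 : a ≤ 1 := by
    rw [hadef, div_le_one h1B]; linarith
  have haE : E / 2 ≤ a := by
    rw [hadef]; exact wb_auxaE _ _ _ hE0 hB1 hB0.le hEe
  set Q := ∑ i, ∑ j, ginv x i j * x i * x j with hQdef
  have hsum : ∑ i, x i ^ 2 = s ^ 2 := (sigma'_sq x).symm
  have hQl : lam⁻¹ * s ^ 2 ≤ Q := by have := hlow x x; rwa [hsum] at this
  have hQu : Q ≤ lam * s ^ 2 := by have := hup x x; rwa [hsum] at this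
  clear hlow hup
  have hQ0 : 0 < Q := lt_of_lt_of_le (by positivity) hQl
  have hG : gPair ginv (fun y => psi ε (sigma' y)) (fun y => psi ε (sigma' y)) x
      = (a / s) ^ 2 * Q := gPair_w_eq hε ginv hx
  have hts : (a / s) ^ 2 * s ^ 2 = a ^ 2 := by field_simp
  have hGl : lam⁻¹ * a ^ 2 ≤ (a / s) ^ 2 * Q := by
    have h1 := mul_le_mul_of_nonneg_left hQl (sq_nonneg (a / s))
    calc lam⁻¹ * a ^ 2 = (a / s) ^ 2 * (lam⁻¹ * s ^ 2) := by rw [← hts]; ring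
      _ ≤ (a / s) ^ 2 * Q := h1
  have hGu : (a / s) ^ 2 * Q ≤ lam * a ^ 2 := by
    have h1 := mul_le_mul_of_nonneg_left hQu (sq_nonneg (a / s))
    calc (a / s) ^ 2 * Q ≤ (a / s) ^ 2 * (lam * s ^ 2) := h1
      _ = lam * a ^ 2 := by rw [← hts]; ring
  refine ⟨⟨?_, ?_⟩, ⟨?_, ?_⟩, ⟨?_, ?_⟩, ?_⟩
  · rw [hpsi]
    calc C⁻¹ * s ≤ e * s := mul_le_mul_of_nonneg_right (hCE.trans hEe) hs.le
      _ = s * e := mul_comm _ _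
  · rw [hpsi]
    exact mul_le_of_le_one_right hs.le he1
  · rw [hG, Real.le_sqrt hCi0.le (mul_nonneg (sq_nonneg _) hQ0.le)]
    have h1 : (C⁻¹) ^ 2 ≤ lam⁻¹ * a ^ 2 := by
      rw [hCinv]; exact wb_aux1 _ _ _ hlam hE0 haE
    linarith
  · rw [hG]
    have h1 : (a / s) ^ 2 * Q ≤ C ^ 2 :=
      wb_aux2 _ _ _ hlam (hGu.trans (wb_aux3 _ _ ha0.le ha1 (by linarith))) hC2
    calc Real.sqrt ((a / s) ^ 2 * Q) ≤ Real.sqrt (C ^ 2) := Real.sqrt_le_sqrt h1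
      _ = C := Real.sqrt_sq hC0.le
  · rw [hG, hpsi]
    have hre : (a / s) ^ 2 * Q / (s * e) ^ 2 = Q / (s ^ 4 * (1 + B) ^ 2) := by
      rw [hadef]; field_simp
    rw [hre, div_le_div_iff₀ (by positivity) (by positivity)]
    exact wb_aux4 _ _ _ _ hQl hs.le hB0.le
  · rw [hG, hpsi]
    have hre : (a / s) ^ 2 * Q / (s * e) ^ 2 = Q / (s ^ 4 * (1 + B) ^ 2) := by
      rw [hadef]; field_simp
    rw [hre, div_le_div_iff₀ (by positivity) (by positivity)]
    exact wb_aux5 _ _ _ _ hQu hs.le hB0.le (by linarith)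
  · rw [hG, hpsi]
    have hre : (a / s) ^ 2 * Q / (s * e) ^ 2 = Q / (s ^ 4 * (1 + B) ^ 2) := by
      rw [hadef]; field_simp
    rw [hre, div_div, div_le_div_iff₀ (by positivity) (by positivity)]
    exact wb_aux6 _ _ _ _ hQl hs.le hB0.le hB1 hlaminv.le
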